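/- arXiv:2511.11545 — 2 statements merged into one kernel-verified Lean document; each statement's English description precedes it below -/
import Mathlib

section
/- With the definitions č_N(x*,u) := max over samples (xᵢ,u,xᵢ⁺) in D_N of (xᵢ⁺ - L·‖xᵢ-x*‖·𝟙) - h and f̂_N(x*,u) := min over samples of (xᵢ⁺ + L·‖xᵢ-x*‖·𝟙) - l, for every sample set D_N containing at least one sample with input u, we have č_N(x*,u) ≤ f(x*,u) ≤ f̂_N(x*,u) componentwise. -/
/-- the data-driven lower bound `č_N` and upper bound `f̂_N`
(componentwise max/min over the samples of `D_N` with input `u`) bound the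
true dynamics `f(x*, u)` componentwise. -/
theorem stmt1 {n : ℕ} {U : Type*} [DecidableEq U]
    (f : (Fin n → ℝ) → U → (Fin n → ℝ)) (L : ℝ)
    (hLip : ∀ x y u, ‖f x u - f y u‖ ≤ L * ‖x - y‖)
    (l h : Fin n → ℝ)
    (D : Finset ((Fin n → ℝ) × U × (Fin n → ℝ))) (u : U)
    (hD : (D.filter (fun p => p.2.1 = u)).Nonempty)
    (hobs : ∀ p ∈ D, ∃ w : Fin n → ℝ, (∀ i, l i ≤ w i ∧ w i ≤ h i) ∧
      p.2.2 = f p.1 p.2.1 + w)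
    (xstar : Fin n → ℝ) :
    ∀ i, (D.filter (fun p => p.2.1 = u)).sup' hD
            (fun p => p.2.2 i - L * ‖p.1 - xstar‖) - h i ≤ f xstar u i ∧
         f xstar u i ≤ (D.filter (fun p => p.2.1 = u)).inf' hD
            (fun p => p.2.2 i + L * ‖p.1 - xstar‖) - l i := by
  intro i
  have key : ∀ p ∈ D.filter (fun p => p.2.1 = u),
      p.2.2 i - L * ‖p.1 - xstar‖ ≤ f xstar u i + h i ∧
      f xstar u i + l i ≤ p.2.2 i + L * ‖p.1 - xstar‖ := by
    intro p hp
    rw [Finset.mem_filter] at hp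
    obtain ⟨hpD, hpu⟩ := hp
    obtain ⟨w, hw, hpe⟩ := hobs p hpD
    have hLi : |f p.1 u i - f xstar u i| ≤ L * ‖p.1 - xstar‖ := by
      calc |f p.1 u i - f xstar u i| = |(f p.1 u - f xstar u) i| := by
              simp [Pi.sub_apply]
        _ ≤ ‖f p.1 u - f xstar u‖ := by
              rw [← Real.norm_eq_abs]; exact norm_le_pi_norm _ i
        _ ≤ L * ‖p.1 - xstar‖ := hLip _ _ _
    rw [abs_le] at hLi
    have hpi : p.2.2 i = f p.1 u i + w i := by rw [hpe, hpu]; rfl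
    obtain ⟨hwl, hwh⟩ := hw i
    constructor <;> rw [hpi] <;> linarith [hLi.1, hLi.2]
  constructor
  · rw [sub_le_iff_le_add]
    exact Finset.sup'_le _ _ fun p hp => (key p hp).1
  · rw [le_sub_iff_add_le]
    exact Finset.le_inf' _ _ fun p hp => (key p hp).2
end

section
/- Range bound for the coBüchi progress measure: in a finite coBüchi game, if a progress measure ρ : V → ℕ ∪ {⊤} is the least fixpoint of the lifting rules (ρ(v) ≥ pr(v)+1 for v ∈ B, ρ(v) ≥ pr(v) otherwise, with pr(v) the min of ρ over successors for Player-0 vertices and the max for Player-1 vertices) and ρ(v) = m ∈ ℕ for some vertex v, then Player 1 has a positional strategy from v guaranteeing that at least m (counted with multiplicity along the play prefix) visits to coBüchi vertices in B occur; consequently if m > |B| then some coBüchi vertex lies on a reachable cycle consistent with this strategy, and v is winning for Player 1. Hence the least fixpoint values on Player-0's winning region are at most |B|. -/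
set_option linter.unusedSectionVars false
set_option linter.unusedTactic false
set_option maxHeartbeats 1000000


open Classical in
/-- The value `pr ρ v`: min of `ρ` over successors for Player-0 vertices,
max over successors for Player-1 vertices (values in `ℕ∞`). -/
noncomputable def pr {V : Type*} (V0 : Set V) (E : Set (V × V))
    (ρ : V → ℕ∞) (v : V) : ℕ∞ :=
  if v ∈ V0 then ⨅ w ∈ {w | (v, w) ∈ E}, ρ w
  else ⨆ w ∈ {w | (v, w) ∈ E}, ρ w

/-- Validity of a coBüchi progress measure: `ρ v ≥ pr v + 1` on the coBüchi
set `B` and `ρ v ≥ pr v` elsewhere. -/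
def ValidPM {V : Type*} [DecidableEq V] (V0 : Set V) (E : Set (V × V))
    (B : Finset V) (ρ : V → ℕ∞) : Prop :=
  ∀ v, (if v ∈ B then pr V0 E ρ v + 1 else pr V0 E ρ v) ≤ ρ v

namespace S13
open Classical

variable {V : Type*} [Fintype V] [DecidableEq V] (V0 : Set V) (E : Set (V × V)) (B : Finset V)

noncomputable def lift (ρ : V → ℕ∞) : V → ℕ∞ :=
  fun v => if v ∈ B then pr V0 E ρ v + 1 else pr V0 E ρ v

lemma valid_iff (ρ : V → ℕ∞) :
    ValidPM V0 E B ρ ↔ ∀ v, lift V0 E B ρ v ≤ ρ v := Iff.rfl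

lemma pr_mono {ρ ρ' : V → ℕ∞} (h : ∀ u, ρ u ≤ ρ' u) (v : V) :
    pr V0 E ρ v ≤ pr V0 E ρ' v := by
  unfold pr
  split
  · exact iInf_mono fun w => iInf_mono fun _ => h w
  · exact iSup_mono fun w => iSup_mono fun _ => h w

lemma lift_mono {ρ ρ' : V → ℕ∞} (h : ∀ u, ρ u ≤ ρ' u) (v : V) :
    lift V0 E B ρ v ≤ lift V0 E B ρ' v := by
  unfold lift
  split
  · exact add_le_add_left (pr_mono V0 E h v) 1
  · exact pr_mono V0 E h v

noncomputable def iter : ℕ → V → ℕ∞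
  | 0 => fun _ => 0
  | (k+1) => lift V0 E B (iter k)

lemma iter_succ_le : ∀ k v, iter V0 E B k v ≤ iter V0 E B (k+1) v := by
  intro k
  induction k with
  | zero => intro v; exact zero_le
  | succ k ih => intro v; exact lift_mono V0 E B ih v

lemma iter_mono {k l : ℕ} (h : k ≤ l) (v : V) :
    iter V0 E B k v ≤ iter V0 E B l v := by
  induction l with
  | zero => simp_all
  | succ l ih =>
    rcases Nat.lt_or_ge k (l+1) with h' | h'
    · exact le_trans (ih (Nat.lt_succ_iff.mp h')) (iter_succ_le V0 E B l v)
    · have : k = l + 1 := le_antisymm h h'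
      subst this; exact le_rfl

lemma iter_mono' : ∀ w, Monotone (fun k => iter V0 E B k w) :=
  fun w _ _ h => iter_mono V0 E B h w

lemma iter_le_valid {ρ : V → ℕ∞} (hv : ValidPM V0 E B ρ) :
    ∀ k v, iter V0 E B k v ≤ ρ v := by
  intro k
  induction k with
  | zero => intro v; exact zero_le
  | succ k ih => intro v; exact le_trans (lift_mono V0 E B ih v) (hv v)

lemma minimax (S : Set V) (g : ℕ → V → ℕ∞)
    (hmono : ∀ w, Monotone (fun k => g k w)) :
    ⨅ w ∈ S, ⨆ k, g k w ≤ ⨆ k, ⨅ w ∈ S, g k w := by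
  by_contra hcon
  push_neg at hcon
  set R := ⨆ k, ⨅ w ∈ S, g k w with hR
  have hRtop : R ≠ ⊤ := by
    intro h
    rw [h] at hcon
    exact (not_top_lt) hcon
  have h1 : ∀ w ∈ S, ∃ k, R < g k w := by
    intro w hw
    have : R < ⨆ k, g k w :=
      lt_of_lt_of_le hcon (iInf_le_of_le w (iInf_le_of_le hw le_rfl))
    exact lt_iSup_iff.mp this
  choose kk hkk using h1
  have hfin : S.Finite := Set.toFinite S
  set K := hfin.toFinset.sup (fun w => if h : w ∈ S then kk w h else 0) with hK
  have h2 : ∀ w (hw : w ∈ S), R < g K w := by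
    intro w hw
    refine lt_of_lt_of_le (hkk w hw) (hmono w ?_)
    have hmem : w ∈ hfin.toFinset := by simpa using hw
    have : (if h : w ∈ S then kk w h else 0) ≤ K :=
      Finset.le_sup (f := fun w => if h : w ∈ S then kk w h else 0) hmem
    simpa [hw] using this
  have h3 : R + 1 ≤ ⨅ w ∈ S, g K w :=
    le_iInf₂ fun w hw => (ENat.add_one_le_iff hRtop).mpr (h2 w hw)
  have h4 : (⨅ w ∈ S, g K w) ≤ R := le_iSup (fun k => ⨅ w ∈ S, g k w) K
  exact lt_irrefl _ ((ENat.add_one_le_iff hRtop).mp (le_trans h3 h4))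

lemma sup_valid :
    ValidPM V0 E B (fun u => ⨆ k, iter V0 E B k u) := by
  rw [valid_iff]
  intro v
  have claim1 : pr V0 E (fun u => ⨆ k, iter V0 E B k u) v
      ≤ ⨆ k, pr V0 E (iter V0 E B k) v := by
    unfold pr
    by_cases hv : v ∈ V0
    · simp only [if_pos hv]
      exact minimax {w | (v, w) ∈ E} (fun k w => iter V0 E B k w) (iter_mono' V0 E B)
    · simp only [if_neg hv]
      refine iSup₂_le fun w hw => ?_
      refine iSup_le fun k => ?_
      exact le_iSup_of_le k (le_iSup₂_of_le w hw le_rfl)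
  have claim2 : lift V0 E B (fun u => ⨆ k, iter V0 E B k u) v
      ≤ ⨆ k, lift V0 E B (iter V0 E B k) v := by
    unfold lift
    by_cases hv : v ∈ B
    · simp only [if_pos hv]
      calc pr V0 E (fun u => ⨆ k, iter V0 E B k u) v + 1
          ≤ (⨆ k, pr V0 E (iter V0 E B k) v) + 1 := add_le_add_left claim1 1
        _ = ⨆ k, (pr V0 E (iter V0 E B k) v + 1) := ENat.iSup_add _
    · simp only [if_neg hv]
      exact claim1
  refine claim2.trans (iSup_le fun k => ?_)
  exact le_iSup_of_le (k+1) le_rfl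

variable (ρ : V → ℕ∞)

lemma exists_iter_ge (hleast : ∀ ρ', ValidPM V0 E B ρ' → ρ ≤ ρ')
    (c : ℕ) (u : V) (h : (c : ℕ∞) ≤ ρ u) : ∃ k, (c : ℕ∞) ≤ iter V0 E B k u := by
  have hsup : ρ u ≤ ⨆ k, iter V0 E B k u := hleast _ (sup_valid V0 E B) u
  cases c with
  | zero => exact ⟨0, by simp⟩
  | succ c =>
    have h1 : (c : ℕ∞) < ⨆ k, iter V0 E B k u := by
      refine lt_of_lt_of_le ?_ (h.trans hsup)
      exact_mod_cast Nat.lt_succ_self c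
    obtain ⟨k, hk⟩ := lt_iSup_iff.mp h1
    refine ⟨k, ?_⟩
    have := (ENat.add_one_le_iff (by simp : (c:ℕ∞) ≠ ⊤)).mpr hk
    exact_mod_cast this

lemma fixpoint (hvalid : ValidPM V0 E B ρ)
    (hleast : ∀ ρ', ValidPM V0 E B ρ' → ρ ≤ ρ') (v : V) :
    ρ v = lift V0 E B ρ v := by
  refine le_antisymm ?_ (hvalid v)
  refine hleast _ ?_ v
  rw [valid_iff]
  intro u
  exact lift_mono V0 E B (fun w => hvalid w) u

variable (m : ℕ)

/-- capped value, as a natural number -/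
noncomputable def gv (u : V) : ℕ := (min (ρ u) (m : ℕ∞)).toNat

lemma gv_cast (u : V) : (gv ρ m u : ℕ∞) = min (ρ u) (m : ℕ∞) := by
  unfold gv
  exact ENat.coe_toNat (by
    intro h
    have : (min (ρ u) (m:ℕ∞)) ≤ (m:ℕ∞) := min_le_right _ _
    rw [h] at this
    exact (by simp : ¬ ((⊤:ℕ∞) ≤ (m:ℕ∞))) this)

lemma gv_le (u : V) : gv ρ m u ≤ m := by
  have := gv_cast ρ m u
  have h2 : (gv ρ m u : ℕ∞) ≤ (m:ℕ∞) := this ▸ min_le_right _ _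
  exact_mod_cast h2

lemma gv_le_rho (u : V) : (gv ρ m u : ℕ∞) ≤ ρ u := by
  rw [gv_cast]; exact min_le_left _ _

lemma le_gv {n : ℕ} {u : V} (h1 : (n : ℕ∞) ≤ ρ u) (h2 : n ≤ m) : n ≤ gv ρ m u := by
  have : (n : ℕ∞) ≤ (gv ρ m u : ℕ∞) := by
    rw [gv_cast]
    exact le_min h1 (by exact_mod_cast h2)
  exact_mod_cast this

noncomputable def rnk (u : V) : ℕ :=
  sInf {k | (gv ρ m u : ℕ∞) ≤ iter V0 E B k u}

lemma rnk_spec (hleast : ∀ ρ', ValidPM V0 E B ρ' → ρ ≤ ρ') (u : V) :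
    (gv ρ m u : ℕ∞) ≤ iter V0 E B (rnk V0 E B ρ m u) u := by
  have hne : {k | (gv ρ m u : ℕ∞) ≤ iter V0 E B k u}.Nonempty :=
    exists_iter_ge V0 E B ρ hleast (gv ρ m u) u (gv_le_rho ρ m u)
  exact Nat.sInf_mem hne

lemma rnk_le {k : ℕ} {u : V} (h : (gv ρ m u : ℕ∞) ≤ iter V0 E B k u) :
    rnk V0 E B ρ m u ≤ k := Nat.sInf_le h

lemma rnk_pos (hleast : ∀ ρ', ValidPM V0 E B ρ' → ρ ≤ ρ') {u : V}
    (h : 1 ≤ gv ρ m u) : 1 ≤ rnk V0 E B ρ m u := by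
  by_contra hc
  push_neg at hc
  interval_cases h' : rnk V0 E B ρ m u
  · have := rnk_spec V0 E B ρ m hleast u
    rw [h'] at this
    simp only [iter] at this
    have : (gv ρ m u : ℕ∞) ≤ 0 := this
    have : gv ρ m u = 0 := by exact_mod_cast le_antisymm this zero_le
    omega

lemma exists_max_succ (hE : ∀ v, ∃ w, (v, w) ∈ E) (F : V → ℕ∞) (u : V) :
    ∃ w, (u, w) ∈ E ∧ ∀ w', (u, w') ∈ E → F w' ≤ F w := by
  classical
  set S : Set V := {w | (u, w) ∈ E} with hS
  have hfin : S.Finite := Set.toFinite S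
  have hne : hfin.toFinset.Nonempty := by
    obtain ⟨w, hw⟩ := hE u
    exact ⟨w, by simpa [hS] using hw⟩
  obtain ⟨b, hb, hmax⟩ := Finset.exists_max_image hfin.toFinset F hne
  refine ⟨b, by simpa [hS] using hb, fun w' hw' => hmax w' (by simpa [hS] using hw')⟩

noncomputable def tau (hE : ∀ v, ∃ w, (v, w) ∈ E) : V → V := fun u =>
  if u ∈ V0 then choose (hE u)
  else choose (exists_max_succ E hE (iter V0 E B (rnk V0 E B ρ m u - 1)) u)

lemma tau_edge (hE : ∀ v, ∃ w, (v, w) ∈ E) (u : V) :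
    (u, tau V0 E B ρ m hE u) ∈ E := by
  unfold tau
  split
  · exact choose_spec (hE u)
  · exact (choose_spec (exists_max_succ E hE
      (iter V0 E B (rnk V0 E B ρ m u - 1)) u)).1

lemma tau_max (hE : ∀ v, ∃ w, (v, w) ∈ E) {u : V} (hu : u ∉ V0) (w' : V)
    (hw' : (u, w') ∈ E) :
    iter V0 E B (rnk V0 E B ρ m u - 1) w'
      ≤ iter V0 E B (rnk V0 E B ρ m u - 1) (tau V0 E B ρ m hE u) := by
  unfold tau
  rw [if_neg hu]
  exact (choose_spec (exists_max_succ E hE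
    (iter V0 E B (rnk V0 E B ρ m u - 1)) u)).2 w' hw'


lemma lift_eq_pr_add (ρ' : V → ℕ∞) (u : V) :
    lift V0 E B ρ' u = pr V0 E ρ' u + (if u ∈ B then 1 else 0) := by
  unfold lift
  split <;> simp

lemma step (hE : ∀ v, ∃ w, (v, w) ∈ E)
    (hvalid : ValidPM V0 E B ρ)
    (hleast : ∀ ρ', ValidPM V0 E B ρ' → ρ ≤ ρ')
    {u w : V} (hw : (u, w) ∈ E)
    (htau : u ∉ V0 → w = tau V0 E B ρ m hE u) :
    (gv ρ m u - (if u ∈ B then 1 else 0) ≤ gv ρ m w) ∧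
    (u ∉ B → 1 ≤ gv ρ m u →
      gv ρ m u ≤ gv ρ m w ∧
        (gv ρ m w = gv ρ m u → rnk V0 E B ρ m w < rnk V0 E B ρ m u)) := by
  by_cases hgu : gv ρ m u = 0
  · constructor
    · simp [hgu]
    · intro _ h1; omega
  have h1 : 1 ≤ gv ρ m u := Nat.one_le_iff_ne_zero.mpr hgu
  have hk1 : 1 ≤ rnk V0 E B ρ m u := rnk_pos V0 E B ρ m hleast h1
  obtain ⟨k', hk'⟩ : ∃ k', rnk V0 E B ρ m u = k' + 1 :=
    ⟨rnk V0 E B ρ m u - 1, by omega⟩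
  have h0 : (gv ρ m u : ℕ∞) ≤ iter V0 E B (k' + 1) u := by
    rw [← hk']; exact rnk_spec V0 E B ρ m hleast u
  have hpr : (gv ρ m u : ℕ∞)
      ≤ pr V0 E (iter V0 E B k') u + (if u ∈ B then 1 else 0) := by
    have : iter V0 E B (k'+1) u = lift V0 E B (iter V0 E B k') u := rfl
    rw [this, lift_eq_pr_add] at h0
    exact h0
  have hsucc : pr V0 E (iter V0 E B k') u ≤ iter V0 E B k' w := by
    by_cases hu : u ∈ V0
    · unfold pr
      rw [if_pos hu]
      exact iInf_le_of_le w (iInf_le_of_le hw le_rfl)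
    · rw [htau hu]
      unfold pr
      rw [if_neg hu]
      refine iSup₂_le fun w' hw' => ?_
      have := tau_max V0 E B ρ m hE hu w' hw'
      rw [hk'] at this
      simpa using this
  have hch : (gv ρ m u : ℕ∞) ≤ iter V0 E B k' w + (if u ∈ B then 1 else 0) :=
    hpr.trans (add_le_add_left hsucc _)
  have hA : ((gv ρ m u - (if u ∈ B then 1 else 0) : ℕ) : ℕ∞) ≤ iter V0 E B k' w := by
    by_cases hub : u ∈ B
    · rw [if_pos hub] at hch ⊢
      obtain ⟨c', hc'⟩ : ∃ c', gv ρ m u = c' + 1 := ⟨gv ρ m u - 1, by omega⟩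
      rw [hc'] at hch
      have : ((c' : ℕ∞) + 1) ≤ iter V0 E B k' w + 1 := by exact_mod_cast hch
      have h2 : (c' : ℕ∞) ≤ iter V0 E B k' w :=
        (ENat.add_le_add_iff_right ENat.one_ne_top).mp this
      have : gv ρ m u - 1 = c' := by omega
      rw [this]
      exact h2
    · rw [if_neg hub] at hch ⊢
      simpa using hch
  have hrho : ((gv ρ m u - (if u ∈ B then 1 else 0) : ℕ) : ℕ∞) ≤ ρ w :=
    hA.trans (iter_le_valid V0 E B hvalid k' w)
  have hgw : gv ρ m u - (if u ∈ B then 1 else 0) ≤ gv ρ m w :=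
    le_gv ρ m hrho (le_trans (Nat.sub_le _ _) (gv_le ρ m u))
  refine ⟨hgw, fun hnB _ => ?_⟩
  rw [if_neg hnB] at hgw hA
  simp only [Nat.sub_zero] at hgw hA
  refine ⟨hgw, fun heq => ?_⟩
  have : (gv ρ m w : ℕ∞) ≤ iter V0 E B k' w := by rw [heq]; exact hA
  have := rnk_le V0 E B ρ m this
  omega

lemma reachB (hE : ∀ v, ∃ w, (v, w) ∈ E)
    (hvalid : ValidPM V0 E B ρ)
    (hleast : ∀ ρ', ValidPM V0 E B ρ' → ρ ≤ ρ')
    {u : V} {ξ : ℕ → V} (h1 : 1 ≤ gv ρ m u) (h0 : ξ 0 = u)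
    (he : ∀ i, (ξ i, ξ (i+1)) ∈ E)
    (hc : ∀ i, ξ i ∉ V0 → ξ (i+1) = tau V0 E B ρ m hE (ξ i)) :
    ∃ j, ξ j ∈ B := by
  by_contra hnB
  push_neg at hnB
  have hg1 : ∀ j, 1 ≤ gv ρ m (ξ j) := by
    intro j
    induction j with
    | zero => rw [h0]; exact h1
    | succ j ih =>
      have := ((step V0 E B ρ m hE hvalid hleast (he j) (hc j)).2 (hnB j) ih).1
      omega
  have hstep : ∀ j, gv ρ m (ξ j) ≤ gv ρ m (ξ (j+1)) ∧
      (gv ρ m (ξ (j+1)) = gv ρ m (ξ j) →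
        rnk V0 E B ρ m (ξ (j+1)) < rnk V0 E B ρ m (ξ j)) := by
    intro j
    have h := (step V0 E B ρ m hE hvalid hleast (he j) (hc j)).2 (hnB j) (hg1 j)
    exact ⟨h.1, h.2⟩
  set RM := Finset.univ.sup (fun u => rnk V0 E B ρ m u) with hRM
  have hrm : ∀ u, rnk V0 E B ρ m u ≤ RM :=
    fun u => Finset.le_sup (Finset.mem_univ u)
  set μ : ℕ → ℕ :=
    fun j => (m - gv ρ m (ξ j)) * (RM + 1) + rnk V0 E B ρ m (ξ j) with hμ
  have hdec : ∀ j, μ (j+1) < μ j := by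
    intro j
    obtain ⟨hle, hlt⟩ := hstep j
    rcases Nat.lt_or_ge (gv ρ m (ξ j)) (gv ρ m (ξ (j+1))) with hcase | hcase
    · have hb : gv ρ m (ξ (j+1)) ≤ m := gv_le ρ m _
      have ha : gv ρ m (ξ j) < m := lt_of_lt_of_le hcase hb
      have hab : m - gv ρ m (ξ (j+1)) + 1 ≤ m - gv ρ m (ξ j) := by omega
      calc μ (j+1)
          < (m - gv ρ m (ξ (j+1))) * (RM + 1) + (RM + 1) := by
            have := hrm (ξ (j+1)); simp only [hμ]; omega
        _ = (m - gv ρ m (ξ (j+1)) + 1) * (RM + 1) := by ring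
        _ ≤ (m - gv ρ m (ξ j)) * (RM + 1) := Nat.mul_le_mul_right _ hab
        _ ≤ μ j := Nat.le_add_right _ _
    · have heq : gv ρ m (ξ (j+1)) = gv ρ m (ξ j) := le_antisymm hcase hle
      have hr := hlt heq
      simp only [hμ, heq]
      omega
  have hsum : ∀ j, μ j + j ≤ μ 0 := by
    intro j
    induction j with
    | zero => omega
    | succ j ih => have := hdec j; omega
  have := hsum (μ 0 + 1)
  omega

lemma forces (hE : ∀ v, ∃ w, (v, w) ∈ E)
    (hvalid : ValidPM V0 E B ρ)
    (hleast : ∀ ρ', ValidPM V0 E B ρ' → ρ ≤ ρ') :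
    ∀ n : ℕ, ∀ u : V, n ≤ gv ρ m u → ∀ ξ : ℕ → V, ξ 0 = u →
      (∀ i, (ξ i, ξ (i+1)) ∈ E) →
      (∀ i, ξ i ∉ V0 → ξ (i+1) = tau V0 E B ρ m hE (ξ i)) →
      ∃ t, n ≤ ((Finset.range t).filter (fun i => ξ i ∈ B)).card := by
  intro n
  induction n with
  | zero => intro u _ ξ _ _ _; exact ⟨0, Nat.zero_le _⟩
  | succ n ih =>
    intro u hn ξ h0 he hc
    have h1 : 1 ≤ gv ρ m u := by omega
    have hreach : ∃ j, ξ j ∈ B :=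
      reachB V0 E B ρ m hE hvalid hleast h1 h0 he hc
    set j0 := Nat.find hreach with hj0
    have hjB : ξ j0 ∈ B := Nat.find_spec hreach
    have hmin : ∀ i, i < j0 → ξ i ∉ B := fun i hi => Nat.find_min hreach hi
    have hupto : ∀ i, i ≤ j0 → n + 1 ≤ gv ρ m (ξ i) := by
      intro i
      induction i with
      | zero => intro _; rw [h0]; exact hn
      | succ i ihh =>
        intro hi
        have hile : i ≤ j0 := by omega
        have hibd := ihh hile
        have hiB : ξ i ∉ B := hmin i (by omega)
        have := ((step V0 E B ρ m hE hvalid hleast (he i) (hc i)).2 hiB (by omega)).1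
        omega
    have hj1 : n ≤ gv ρ m (ξ (j0 + 1)) := by
      have hfst := (step V0 E B ρ m hE hvalid hleast (he j0) (hc j0)).1
      rw [if_pos hjB] at hfst
      have := hupto j0 le_rfl
      omega
    obtain ⟨t, ht⟩ := ih (ξ (j0+1)) hj1 (fun i => ξ (j0+1+i)) rfl
      (fun i => by
        show (ξ (j0+1+i), ξ (j0+1+(i+1))) ∈ E
        have harith : j0+1+(i+1) = (j0+1+i)+1 := by omega
        rw [harith]
        exact he _)
      (fun i hi => by
        show ξ (j0+1+(i+1)) = tau V0 E B ρ m hE (ξ (j0+1+i))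
        have harith : j0+1+(i+1) = (j0+1+i)+1 := by omega
        rw [harith]
        exact hc _ hi)
    beta_reduce at ht
    refine ⟨j0+1+t, ?_⟩
    classical
    set A : Finset ℕ := insert j0 ((Finset.range t).image (fun i => j0+1+i)) with hA
    have hsub : A ⊆ Finset.range (j0+1+t) := by
      intro x hx
      simp only [hA, Finset.mem_insert, Finset.mem_image, Finset.mem_range] at hx
      rcases hx with rfl | ⟨i, hi, rfl⟩ <;> simp only [Finset.mem_range] <;> omega
    have hjni : j0 ∉ (Finset.range t).image (fun i => j0+1+i) := by
      simp only [Finset.mem_image, Finset.mem_range]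
      rintro ⟨i, hi, h⟩
      omega
    have himg : (((Finset.range t).image (fun i => j0+1+i)).filter (fun i => ξ i ∈ B))
        = ((Finset.range t).filter (fun i => ξ (j0+1+i) ∈ B)).image (fun i => j0+1+i) := by
      ext x
      simp only [Finset.mem_filter, Finset.mem_image, Finset.mem_range]
      constructor
      · rintro ⟨⟨i, hi, rfl⟩, hB⟩; exact ⟨i, ⟨hi, hB⟩, rfl⟩
      · rintro ⟨i, ⟨hi, hB⟩, rfl⟩; exact ⟨⟨i, hi, rfl⟩, hB⟩
    have hinj : Function.Injective (fun i : ℕ => j0+1+i) := by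
      intro a b h
      simp only [] at h
      omega
    have hcardA : (A.filter (fun i => ξ i ∈ B)).card
        = ((Finset.range t).filter (fun i => ξ (j0+1+i) ∈ B)).card + 1 := by
      rw [hA, Finset.filter_insert, if_pos hjB,
        Finset.card_insert_of_notMem (fun h => hjni (Finset.mem_of_mem_filter _ h)),
        himg, Finset.card_image_of_injective _ hinj]
    have hAle : (A.filter (fun i => ξ i ∈ B)).card
        ≤ ((Finset.range (j0+1+t)).filter (fun i => ξ i ∈ B)).card :=
      Finset.card_le_card (Finset.filter_subset_filter _ hsub)
    calc n + 1 ≤ ((Finset.range t).filter (fun i => ξ (j0+1+i) ∈ B)).card + 1 := by omega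
      _ = (A.filter (fun i => ξ i ∈ B)).card := hcardA.symm
      _ ≤ ((Finset.range (j0+1+t)).filter (fun i => ξ i ∈ B)).card := hAle

lemma infiniteVisits (hE : ∀ v, ∃ w, (v, w) ∈ E)
    (hvalid : ValidPM V0 E B ρ)
    (hleast : ∀ ρ', ValidPM V0 E B ρ' → ρ ≤ ρ')
    (hB : B.card < m) {v : V} (hm : (m : ℕ∞) ≤ ρ v) :
    ∀ ξ : ℕ → V, ξ 0 = v → (∀ i, (ξ i, ξ (i+1)) ∈ E) →
      (∀ i, ξ i ∉ V0 → ξ (i+1) = tau V0 E B ρ m hE (ξ i)) →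
      {i | ξ i ∈ B}.Infinite := by
  have hgv : m ≤ gv ρ m v := le_gv ρ m hm le_rfl
  have main : ∀ c : ℕ, ∀ ξ : ℕ → V, ξ 0 = v → (∀ i, (ξ i, ξ (i+1)) ∈ E) →
      (∀ i, ξ i ∉ V0 → ξ (i+1) = tau V0 E B ρ m hE (ξ i)) →
      ∀ (hfin : {i | ξ i ∈ B}.Finite), hfin.toFinset.card = c → False := by
    intro c
    induction c using Nat.strong_induction_on with
    | _ c IH =>
      intro ξ h0 he hc hfin hcard
      obtain ⟨t, ht⟩ := forces V0 E B ρ m hE hvalid hleast m v hgv ξ h0 he hc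
      have hsub : (Finset.range t).filter (fun i => ξ i ∈ B) ⊆ hfin.toFinset := by
        intro i hi
        rw [Set.Finite.mem_toFinset]
        exact (Finset.mem_filter.mp hi).2
      have hmc : m ≤ c := by
        have := ht.trans (Finset.card_le_card hsub)
        omega
      have hmaps : ∀ i ∈ hfin.toFinset, ξ i ∈ B := by
        intro i hi
        rwa [Set.Finite.mem_toFinset] at hi
      obtain ⟨i1, hi1, j1, hj1, hne, heq⟩ :=
        Finset.exists_ne_map_eq_of_card_lt_of_maps_to (by omega : B.card < hfin.toFinset.card) hmaps
      -- order the pair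
      obtain ⟨i0, j0, hij, hmemi, heq0⟩ :
          ∃ i0 j0 : ℕ, i0 < j0 ∧ i0 ∈ hfin.toFinset ∧ ξ j0 = ξ i0 := by
        rcases Nat.lt_or_ge i1 j1 with h | h
        · exact ⟨i1, j1, h, hi1, heq.symm⟩
        · have : j1 < i1 := by omega
          exact ⟨j1, i1, this, hj1, heq⟩
      set d := j0 - i0 with hd
      have hj0d : i0 + d = j0 := by omega
      set th : ℕ → ℕ := fun t => if t < i0 then t else t + d with hth
      set ξ' : ℕ → V := fun t => if t < i0 then ξ t else ξ (t + d) with hξ'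
      have keyA : ∀ t, ξ' t = ξ (th t) := by
        intro t
        by_cases h : t < i0 <;> simp [hξ', hth, h]
      have keyB : ∀ t, ξ' (t+1) = ξ (th t + 1) := by
        intro t
        by_cases h : t < i0
        · by_cases h2 : t + 1 < i0
          · simp [hξ', hth, h, h2]
          · have hti : t + 1 = i0 := by omega
            have : ξ' (t+1) = ξ (t + 1 + d) := by simp [hξ', h2]
            rw [this]
            have h3 : t + 1 + d = j0 := by omega
            rw [h3, heq0, ← hti]
            simp [hth, h]
        · have h2 : ¬ (t + 1 < i0) := by omega
          have : ξ' (t+1) = ξ (t + 1 + d) := by simp [hξ', h2]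
          rw [this]
          have h3 : t + 1 + d = (t + d) + 1 := by omega
          rw [h3]
          simp [hth, h]
      have h0' : ξ' 0 = v := by
        by_cases h : 0 < i0
        · simp [hξ', h, h0]
        · have hi00 : i0 = 0 := by omega
          have : ξ' 0 = ξ (0 + d) := by simp [hξ', hi00]
          rw [this]
          have : 0 + d = j0 := by omega
          rw [this, heq0, hi00, h0]
      have he' : ∀ i, (ξ' i, ξ' (i+1)) ∈ E := by
        intro i
        rw [keyA, keyB]
        exact he (th i)
      have hc' : ∀ i, ξ' i ∉ V0 → ξ' (i+1) = tau V0 E B ρ m hE (ξ' i) := by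
        intro i hi
        rw [keyB i, keyA i]
        rw [keyA i] at hi
        exact hc (th i) hi
      have hthmono : StrictMono th := by
        intro a b hab
        simp only [hth]
        by_cases ha : a < i0 <;> by_cases hb : b < i0 <;> simp [ha, hb] <;> omega
      have hthinj : Function.Injective th := hthmono.injective
      have hsubset : {t | ξ' t ∈ B} ⊆ th ⁻¹' {i | ξ i ∈ B} := by
        intro t ht'
        simp only [Set.mem_preimage, Set.mem_setOf_eq]
        rw [← keyA]
        exact ht'
      have hfin' : {t | ξ' t ∈ B}.Finite :=
        (hfin.preimage (hthinj.injOn)).subset hsubset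
      -- card bound
      have hthne : ∀ t, th t ≠ i0 := by
        intro t
        simp only [hth]
        by_cases h : t < i0 <;> simp [h] <;> omega
      have hmapsTo : ∀ t ∈ hfin'.toFinset, th t ∈ hfin.toFinset.erase i0 := by
        intro t ht'
        rw [Set.Finite.mem_toFinset] at ht'
        rw [Finset.mem_erase, Set.Finite.mem_toFinset]
        refine ⟨hthne t, ?_⟩
        show ξ (th t) ∈ B
        rw [← keyA t]
        exact ht'
      have hcard' : hfin'.toFinset.card ≤ (hfin.toFinset.erase i0).card :=
        Finset.card_le_card_of_injOn th hmapsTo (hthinj.injOn)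
      have hclt : hfin'.toFinset.card < c := by
        have := Finset.card_erase_of_mem hmemi
        omega
      exact IH _ hclt ξ' h0' he' hc' hfin' rfl
  intro ξ h0 he hc
  by_contra hinf
  rw [Set.not_infinite] at hinf
  exact main _ ξ h0 he hc hinf rfl

open Classical in
noncomputable def playAux (σ : List V → V → V) (τ : V → V) (v : V) :
    ℕ → List V × V
  | 0 => ([], v)
  | (n+1) =>
    let p := playAux σ τ v n
    (p.1 ++ [p.2], if p.2 ∈ V0 then σ p.1 p.2 else τ p.2)

lemma playAux_fst (σ : List V → V → V) (τ : V → V) (v : V) (n : ℕ) :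
    (playAux V0 σ τ v n).1
      = List.ofFn (fun j : Fin n => (playAux V0 σ τ v (j : ℕ)).2) := by
  induction n with
  | zero => simp [playAux]
  | succ n ih =>
    rw [List.ofFn_succ']
    show (playAux V0 σ τ v n).1 ++ [(playAux V0 σ τ v n).2] = _
    rw [ih, List.concat_eq_append]
    simp

end S13

/-- range bound for the coBüchi progress measure.  If `ρ` is the
least valid progress measure and `ρ v = m ∈ ℕ`, then Player 1 has a positional
strategy from `v` forcing at least `m` visits (counted with multiplicity along
a play prefix) to coBüchi vertices; consequently if `m > |B|` then `v` is
winning for Player 1 (some coBüchi vertex is visited infinitely often), and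
hence on Player 0's winning region the least-fixpoint values are at most
`|B|`. -/
theorem stmt13 {V : Type*} [Fintype V] [DecidableEq V]
    (V0 V1 : Set V) (hpart : ∀ v, v ∈ V0 ↔ v ∉ V1)
    (E : Set (V × V)) (hE : ∀ v, ∃ w, (v, w) ∈ E)
    (B : Finset V)
    (ρ : V → ℕ∞)
    (hvalid : ValidPM V0 E B ρ)
    (hleast : ∀ ρ', ValidPM V0 E B ρ' → ρ ≤ ρ') :
    (∀ (v : V) (m : ℕ), ρ v = (m : ℕ∞) →
      ∃ τ : V → V, (∀ u, (u, τ u) ∈ E) ∧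
        ∀ ξ : ℕ → V, ξ 0 = v → (∀ i, (ξ i, ξ (i + 1)) ∈ E) →
          (∀ i, ξ i ∈ V1 → ξ (i + 1) = τ (ξ i)) →
          ∃ k, m ≤ ((Finset.range k).filter (fun i => ξ i ∈ B)).card) ∧
    (∀ (v : V) (m : ℕ), ρ v = (m : ℕ∞) → B.card < m →
      ∃ τ : V → V, (∀ u, (u, τ u) ∈ E) ∧
        ∀ ξ : ℕ → V, ξ 0 = v → (∀ i, (ξ i, ξ (i + 1)) ∈ E) →
          (∀ i, ξ i ∈ V1 → ξ (i + 1) = τ (ξ i)) →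
          {i | ξ i ∈ B}.Infinite) ∧
    (∀ v : V,
      (∃ σ : List V → V → V, (∀ hl u, u ∈ V0 → (u, σ hl u) ∈ E) ∧
        ∀ ξ : ℕ → V, ξ 0 = v → (∀ i, (ξ i, ξ (i + 1)) ∈ E) →
          (∀ i, ξ i ∈ V0 →
            ξ (i + 1) = σ (List.ofFn fun j : Fin i => ξ j) (ξ i)) →
          {i | ξ i ∈ B}.Finite) →
      ρ v ≤ (B.card : ℕ∞)) := by
  classical
  have hconv : ∀ (u : V), u ∉ V0 → u ∈ V1 := by
    intro u hu
    by_contra h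
    exact hu ((hpart u).mpr h)
  refine ⟨?_, ?_, ?_⟩
  · -- part 1
    intro v m hρ
    refine ⟨S13.tau V0 E B ρ m hE, S13.tau_edge V0 E B ρ m hE, ?_⟩
    intro ξ h0 he hcons
    have hm : m ≤ S13.gv ρ m v := S13.le_gv ρ m (le_of_eq hρ.symm) le_rfl
    exact S13.forces V0 E B ρ m hE hvalid hleast m v hm ξ h0 he
      (fun i hi => hcons i (hconv _ hi))
  · -- part 2
    intro v m hρ hB
    refine ⟨S13.tau V0 E B ρ m hE, S13.tau_edge V0 E B ρ m hE, ?_⟩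
    intro ξ h0 he hcons
    exact S13.infiniteVisits V0 E B ρ m hE hvalid hleast hB (le_of_eq hρ.symm)
      ξ h0 he (fun i hi => hcons i (hconv _ hi))
  · -- part 3
    intro v hσ
    by_contra hcon
    push_neg at hcon
    set m := B.card + 1 with hm
    have hmle : (m : ℕ∞) ≤ ρ v := by
      have : ((B.card : ℕ∞) + 1) ≤ ρ v :=
        (ENat.add_one_le_iff (by simp)).mpr hcon
      rw [hm]
      push_cast
      exact this
    obtain ⟨σ, hσE, hσfin⟩ := hσ
    set τ := S13.tau V0 E B ρ m hE with hτ
    set ξ : ℕ → V := fun n => (S13.playAux V0 σ τ v n).2 with hξ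
    have h0 : ξ 0 = v := rfl
    have hstep : ∀ i, ξ (i+1)
        = if ξ i ∈ V0 then σ (S13.playAux V0 σ τ v i).1 (ξ i) else τ (ξ i) := by
      intro i
      rfl
    have he : ∀ i, (ξ i, ξ (i+1)) ∈ E := by
      intro i
      rw [hstep i]
      by_cases h : ξ i ∈ V0
      · rw [if_pos h]
        exact hσE _ _ h
      · rw [if_neg h]
        exact S13.tau_edge V0 E B ρ m hE (ξ i)
    have hcτ : ∀ i, ξ i ∉ V0 → ξ (i+1) = τ (ξ i) := by
      intro i hi
      rw [hstep i, if_neg hi]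
    have hcσ : ∀ i, ξ i ∈ V0 →
        ξ (i+1) = σ (List.ofFn fun j : Fin i => ξ (j : ℕ)) (ξ i) := by
      intro i hi
      rw [hstep i, if_pos hi, S13.playAux_fst]
    have hfin : {i | ξ i ∈ B}.Finite := hσfin ξ h0 he hcσ
    have hinf : {i | ξ i ∈ B}.Infinite :=
      S13.infiniteVisits V0 E B ρ m hE hvalid hleast (by omega) hmle ξ h0 he hcτ
    exact hinf hfin
end
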